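/- Consider the exact sequences 0 → ker Â → ℂ^{N₁+1} → ℂ^{N₂+1} → 0 and 0 → ker A → ℂ^{N₁} → ℂ^{N₂} → 0, where Â extends A by: J₁(z₁,…,z_{N₁}) = (z₁,…,z_{N₁},−z₁) embeds ℂ^{N₁} into ℂ^{N₁+1}, the first N₂ rows of Â pull back to the rows of A via J₁, and the last row of Â is h(z₁,…,z_{N₁+1}) = z₁ + z_{N₁+1}. Let I : ker A → ker Â be the induced isomorphism. Then I*ν̂ = c₀·ν, where ν, ν̂ are the kernel volume forms induced by the Lebesgue measures, and c₀ is a constant independent of which coordinate is doubled (i.e., independent of the choice of the permutation variant of the construction). -/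

import Mathlib

open scoped TensorProduct

/-- The standard (Lebesgue) volume form `λ_{2N}` on `ℂ^N ≅ ℝ^{2N}`. -/
noncomputable def lebesgueForm (N : ℕ) :
    AlternatingMap ℝ (Fin N → ℂ) ℝ (Fin (2 * N)) :=
  ((Pi.basis fun _ : Fin N => Complex.basisOneI).reindex
      (((Equiv.sigmaEquivProd (Fin N) (Fin 2)).trans finProdFinEquiv).trans
        (finCongr (by omega)))).det

/-- The wedge product of two real-valued alternating forms. -/
noncomputable def wedge {E : Type*} [AddCommGroup E] [Module ℝ E] {p q : ℕ}
    (f : AlternatingMap ℝ E ℝ (Fin p)) (g : AlternatingMap ℝ E ℝ (Fin q)) :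
    AlternatingMap ℝ E ℝ (Fin (p + q)) :=
  ((TensorProduct.lid ℝ ℝ).toLinearMap.compAlternatingMap (f.domCoprod g)).domDomCongr
    finSumFinEquiv

/-- The embedding `J₁ : ℂ^{N} → ℂ^{N+1}`, `J₁(z₁,…,z_N) = (z₁,…,z_N,−z_k)`, which doubles
(with a sign) the `k`-th coordinate. -/
noncomputable def Jdup (N : ℕ) (k : Fin N) : (Fin N → ℂ) →ₗ[ℂ] (Fin (N + 1) → ℂ) :=
  LinearMap.pi fun i =>
    Fin.lastCases (-(LinearMap.proj k)) (fun j => LinearMap.proj j) i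



noncomputable def lebBasis (N : ℕ) : Module.Basis (Fin (2 * N)) ℝ (Fin N → ℂ) :=
  ((Pi.basis fun _ : Fin N => Complex.basisOneI).reindex
      (((Equiv.sigmaEquivProd (Fin N) (Fin 2)).trans finProdFinEquiv).trans
        (finCongr (by omega))))

lemma lebesgueForm_eq (N : ℕ) : lebesgueForm N = (lebBasis N).det := rfl

lemma lebBasis_apply (N : ℕ) (r : Fin (2 * N)) :
    lebBasis N r = Pi.single (⟨(r : ℕ) / 2, by omega⟩ : Fin N)
      (Complex.basisOneI ⟨(r : ℕ) % 2, Nat.mod_lt _ (by norm_num)⟩) := by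
  rw [lebBasis, Module.Basis.reindex_apply]
  have : (((Equiv.sigmaEquivProd (Fin N) (Fin 2)).trans finProdFinEquiv).trans
        (finCongr (by omega : N * 2 = 2 * N))).symm r
      = ⟨⟨(r : ℕ) / 2, by omega⟩, ⟨(r : ℕ) % 2, Nat.mod_lt _ (by norm_num)⟩⟩ := by
    simp only [Equiv.symm_trans_apply, finCongr_symm, finCongr_apply,
      Equiv.sigmaEquivProd_symm_apply, finProdFinEquiv]
    rfl
  rw [this, Pi.basis_apply]



noncomputable def snoc0 (N : ℕ) : (Fin N → ℂ) →ₗ[ℂ] (Fin (N + 1) → ℂ) :=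
  LinearMap.pi fun i => Fin.lastCases 0 (fun j => LinearMap.proj j) i

noncomputable def eL (N : ℕ) : Fin (N + 1) → ℂ := Pi.single (Fin.last N) 1

lemma snoc0_castSucc (N : ℕ) (z : Fin N → ℂ) (j : Fin N) :
    snoc0 N z j.castSucc = z j := by
  simp [snoc0, LinearMap.pi_apply]

lemma snoc0_last (N : ℕ) (z : Fin N → ℂ) : snoc0 N z (Fin.last N) = 0 := by
  simp [snoc0, LinearMap.pi_apply]

lemma Jdup_castSucc (N : ℕ) (k : Fin N) (z : Fin N → ℂ) (j : Fin N) :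
    Jdup N k z j.castSucc = z j := by
  simp [Jdup, LinearMap.pi_apply]

lemma Jdup_last (N : ℕ) (k : Fin N) (z : Fin N → ℂ) :
    Jdup N k z (Fin.last N) = -(z k) := by
  simp [Jdup, LinearMap.pi_apply]

lemma eL_castSucc (N : ℕ) (j : Fin N) : eL N j.castSucc = 0 := by
  simp [eL, Pi.single_eq_of_ne (Fin.castSucc_lt_last j).ne]

lemma eL_last (N : ℕ) : eL N (Fin.last N) = 1 := by simp [eL]

lemma eq_snoc0_of_last_eq_zero {N : ℕ} (t : Fin (N + 1) → ℂ) (h : t (Fin.last N) = 0) :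
    t = snoc0 N (fun j => t j.castSucc) := by
  funext i
  induction i using Fin.lastCases with
  | last => rw [h, snoc0_last]
  | cast j => rw [snoc0_castSucc]

lemma Jdup_sub_snoc0 (N : ℕ) (k : Fin N) (z : Fin N → ℂ) :
    Jdup N k z - snoc0 N z = (-(z k)) • eL N := by
  funext i
  induction i using Fin.lastCases with
  | last => simp [Jdup_last, snoc0_last, eL_last]
  | cast j => simp [Jdup_castSucc, snoc0_castSucc, eL_castSucc]

lemma smul_eL_mem (N : ℕ) (c : ℂ) :
    c • eL N ∈ Submodule.span ℝ ({eL N, Complex.I • eL N} : Set (Fin (N + 1) → ℂ)) := by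
  have h : c • eL N = c.re • eL N + c.im • (Complex.I • eL N) := by
    have h1 : c • eL N = ((c.re : ℂ) + (c.im : ℂ) * Complex.I) • eL N := by
      rw [Complex.re_add_im]
    rw [h1, add_smul, mul_smul, Complex.coe_smul, Complex.coe_smul]
  rw [h]
  exact Submodule.add_mem _
    (Submodule.smul_mem _ _ (Submodule.subset_span (by simp)))
    (Submodule.smul_mem _ _ (Submodule.subset_span (by simp)))


variable {E : Type*} [AddCommGroup E] [Module ℝ E]

lemma alt_update_span {n : ℕ} (f : AlternatingMap ℝ E ℝ (Fin n)) (v : Fin n → E) (i : Fin n)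
    {y : E} (hy : y ∈ Submodule.span ℝ (v '' {j | j ≠ i})) :
    f (Function.update v i y) = 0 := by
  induction hy using Submodule.span_induction with
  | mem x hx =>
    obtain ⟨j, hj, rfl⟩ := hx
    exact f.map_update_self v (Ne.symm hj)
  | zero => exact f.map_update_zero v i
  | add a b _ _ ha hb => rw [f.map_update_add, ha, hb, add_zero]
  | smul r a _ ha => rw [f.map_update_smul, ha, smul_zero]

lemma alt_colops {n : ℕ} (f : AlternatingMap ℝ E ℝ (Fin n)) (v w : Fin n → E)
    (T : Set (Fin n)) (h1 : ∀ j ∈ T, w j = v j)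
    (h2 : ∀ j, w j - v j ∈ Submodule.span ℝ (v '' T)) : f w = f v := by
  classical
  suffices H : ∀ (m : ℕ) (w' : Fin n → E),
      (Finset.univ.filter fun j => w' j ≠ v j).card ≤ m →
      (∀ j ∈ T, w' j = v j) →
      (∀ j, w' j - v j ∈ Submodule.span ℝ (v '' T)) → f w' = f v by
    exact H n w (le_trans (Finset.card_filter_le _ _) (by simp)) h1 h2
  intro m
  induction m with
  | zero =>
    intro w' hc h1' h2'
    have : ∀ j, w' j = v j := by
      intro j
      by_contra hj
      have : j ∈ Finset.univ.filter fun j => w' j ≠ v j := by simp [hj]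
      have := Finset.card_pos.mpr ⟨j, this⟩
      omega
    exact congrArg f (funext this)
  | succ m ih =>
    intro w' hc h1' h2'
    by_cases hall : ∀ j, w' j = v j
    · exact congrArg f (funext hall)
    push_neg at hall
    obtain ⟨j₀, hj₀⟩ := hall
    have hj₀T : j₀ ∉ T := fun h => hj₀ (h1' j₀ h)
    set w'' := Function.update w' j₀ (v j₀) with hw''
    have h1'' : ∀ j ∈ T, w'' j = v j := by
      intro j hj
      by_cases hjj : j = j₀
      · subst hjj; simp [hw'']
      · rw [hw'', Function.update_of_ne hjj]; exact h1' j hj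
    have h2'' : ∀ j, w'' j - v j ∈ Submodule.span ℝ (v '' T) := by
      intro j
      by_cases hjj : j = j₀
      · subst hjj; simp [hw'']
      · rw [hw'', Function.update_of_ne hjj]; exact h2' j
    have hsub : (Finset.univ.filter fun j => w'' j ≠ v j) ⊆
        (Finset.univ.filter fun j => w' j ≠ v j).erase j₀ := by
      intro j hj
      simp only [Finset.mem_filter, Finset.mem_univ, true_and] at hj
      have hjj : j ≠ j₀ := by
        intro h; subst h; exact hj (by simp [hw''])
      rw [hw'', Function.update_of_ne hjj] at hj
      exact Finset.mem_erase.mpr ⟨hjj, by simp [hj]⟩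
    have hcard : (Finset.univ.filter fun j => w'' j ≠ v j).card ≤ m := by
      have h1c := Finset.card_le_card hsub
      have hmem : j₀ ∈ Finset.univ.filter fun j => w' j ≠ v j := by simp [hj₀]
      have h2c := Finset.card_erase_of_mem hmem
      omega
    have step : f w' = f w'' := by
      have hupd : w' = Function.update w'' j₀ (w' j₀) := by
        rw [hw'', Function.update_idem, Function.update_eq_self]
      rw [hupd]
      have hdecomp : w' j₀ = v j₀ + (w' j₀ - v j₀) := by abel
      rw [hdecomp, f.map_update_add]
      have e1 : Function.update w'' j₀ (v j₀) = w'' := by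
        rw [hw'', Function.update_idem]
      rw [e1]
      have e2 : f (Function.update w'' j₀ (w' j₀ - v j₀)) = 0 := by
        apply alt_update_span
        refine Submodule.span_le.mpr ?_ ((h2' j₀))
        intro x hx
        obtain ⟨j, hj, rfl⟩ := hx
        have hjj : j ≠ j₀ := fun h => hj₀T (h ▸ hj)
        have : v j = w'' j := (h1'' j hj).symm
        rw [this]
        exact Submodule.subset_span ⟨j, hjj, rfl⟩
      rw [e2, add_zero]
    rw [step]
    exact ih w'' hcard h1'' h2''



lemma perm_mk_eq_one {p q : ℕ} (π : Equiv.Perm (Fin p ⊕ Fin q))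
    (h : ∀ j, ∃ j', π (Sum.inr j) = Sum.inr j') :
    (Quotient.mk'' π : Equiv.Perm.ModSumCongr (Fin p) (Fin q)) = Quotient.mk'' 1 := by
  choose g hg using h
  have hginj : Function.Injective g := by
    intro a b hab
    have : π (Sum.inr a) = π (Sum.inr b) := by rw [hg a, hg b, hab]
    exact Sum.inr_injective (π.injective this)
  have hgbij := Finite.injective_iff_bijective.mp hginj
  have hinl : ∀ i, ∃ i', π (Sum.inl i) = Sum.inl i' := by
    intro i
    rcases hsum : π (Sum.inl i) with i' | j'
    · exact ⟨i', rfl⟩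
    · obtain ⟨j, rfl⟩ := hgbij.2 j'
      rw [← hg j] at hsum
      exact absurd (π.injective hsum) (by simp)
  choose g1 hg1 using hinl
  have hg1inj : Function.Injective g1 := by
    intro a b hab
    have : π (Sum.inl a) = π (Sum.inl b) := by rw [hg1 a, hg1 b, hab]
    exact Sum.inl_injective (π.injective this)
  have hg1bij := Finite.injective_iff_bijective.mp hg1inj
  have hπ : π = Equiv.Perm.sumCongrHom _ _
      (Equiv.ofBijective g1 hg1bij, Equiv.ofBijective g hgbij) := by
    ext x
    rcases x with i | j
    · simp [Equiv.Perm.sumCongrHom, hg1, Equiv.ofBijective]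
    · simp [Equiv.Perm.sumCongrHom, hg, Equiv.ofBijective]
  have : π ∈ (Equiv.Perm.sumCongrHom (Fin p) (Fin q)).range := ⟨_, hπ.symm⟩
  exact Quotient.sound' (QuotientGroup.leftRel_apply.mpr (by simpa using Subgroup.inv_mem _ this))

lemma wedge_apply_eq {E : Type*} [AddCommGroup E] [Module ℝ E] {p q : ℕ}
    (f : AlternatingMap ℝ E ℝ (Fin p)) (g : AlternatingMap ℝ E ℝ (Fin q))
    (S : Submodule ℝ E) (hg : ∀ y : Fin q → E, (∃ j, y j ∈ S) → g y = 0)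
    (x : Fin (p + q) → E) (hx : ∀ i : Fin p, x (Fin.castAdd q i) ∈ S) :
    wedge f g x = f (fun i => x (Fin.castAdd q i)) * g (fun j => x (Fin.natAdd p j)) := by
  classical
  rw [wedge, AlternatingMap.domDomCongr_apply, LinearMap.compAlternatingMap_apply,
    AlternatingMap.domCoprod_apply, MultilinearMap.sum_apply, map_sum]
  set z : Fin p ⊕ Fin q → E := (x ∘ finSumFinEquiv)
  have hzl : ∀ i, z (Sum.inl i) = x (Fin.castAdd q i) := fun i => by
    simp [z, finSumFinEquiv]
  have hzr : ∀ j, z (Sum.inr j) = x (Fin.natAdd p j) := fun j => by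
    simp [z, finSumFinEquiv]
  refine (Finset.sum_eq_single_of_mem (Quotient.mk'' (1 : Equiv.Perm (Fin p ⊕ Fin q))) (by simp) ?_).trans ?_
  · intro b _ hbne
    revert hbne
    induction b using Quotient.inductionOn' with
    | h π =>
      intro hb
      rw [AlternatingMap.domCoprod.summand_mk'']
      have hcross : ∃ j i, π (Sum.inr j) = Sum.inl i := by
        by_contra hno
        push_neg at hno
        refine hb (perm_mk_eq_one π fun j => ?_)
        rcases hs : π (Sum.inr j) with i | j'
        · exact absurd hs (hno j i)
        · exact ⟨j', rfl⟩
      obtain ⟨j, i, hji⟩ := hcross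
      simp only [MultilinearMap.smul_apply, MultilinearMap.domDomCongr_apply,
        MultilinearMap.domCoprod_apply, AlternatingMap.coe_multilinearMap]
      have : g (fun j' => z (π (Sum.inr j'))) = 0 := by
        apply hg
        exact ⟨j, by rw [hji, hzl]; exact hx i⟩
      rw [this, TensorProduct.tmul_zero, smul_zero, map_zero]
  · rw [AlternatingMap.domCoprod.summand_mk'']
    simp only [Equiv.Perm.sign_one, one_smul, MultilinearMap.domDomCongr_apply,
      MultilinearMap.domCoprod_apply, AlternatingMap.coe_multilinearMap,
      Equiv.Perm.coe_one, id_eq, TensorProduct.lid_tmul, smul_eq_mul]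
    exact congrArg₂ (· * ·) (congrArg f (funext hzl)) (congrArg g (funext hzr))
lemma snoc0_single (N : ℕ) (i : Fin N) (x : ℂ) :
    snoc0 N (Pi.single i x) = Pi.single i.castSucc x := by
  funext m
  induction m using Fin.lastCases with
  | last =>
    rw [snoc0_last, Pi.single_eq_of_ne (Fin.castSucc_lt_last i).ne']
  | cast j =>
    rw [snoc0_castSucc]
    by_cases hij : j = i
    · subst hij; simp
    · rw [Pi.single_eq_of_ne hij, Pi.single_eq_of_ne (by simpa using hij)]

lemma lebBasis_succ_lt (N : ℕ) (j : Fin (2 * (N + 1))) (h : (j : ℕ) < 2 * N) :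
    lebBasis (N + 1) j = snoc0 N (lebBasis N ⟨(j : ℕ), h⟩) := by
  rw [lebBasis_apply, lebBasis_apply, snoc0_single]
  rfl

lemma lebBasis_succ_first (N : ℕ) (j : Fin (2 * (N + 1))) (h : (j : ℕ) = 2 * N) :
    lebBasis (N + 1) j = eL N := by
  rw [lebBasis_apply]
  have h1 : (⟨(j:ℕ)/2, by omega⟩ : Fin (N+1)) = Fin.last N := Fin.ext (by simp; omega)
  have h2 : (⟨(j : ℕ) % 2, Nat.mod_lt _ (by norm_num)⟩ : Fin 2) = 0 := Fin.ext (by simp; omega)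
  rw [h1, h2, eL, Complex.coe_basisOneI]
  rfl

lemma lebBasis_succ_second (N : ℕ) (j : Fin (2 * (N + 1))) (h : (j : ℕ) = 2 * N + 1) :
    lebBasis (N + 1) j = Complex.I • eL N := by
  rw [lebBasis_apply]
  have h1 : (⟨(j:ℕ)/2, by omega⟩ : Fin (N+1)) = Fin.last N := Fin.ext (by simp; omega)
  have h2 : (⟨(j : ℕ) % 2, Nat.mod_lt _ (by norm_num)⟩ : Fin 2) = 1 := Fin.ext (by simp; omega)
  rw [h1, h2, Complex.coe_basisOneI, eL, ← Pi.single_smul]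
  norm_num

/-- The family extending `x : Fin (2N) → ℂ^N` to `Fin (2(N+1)) → ℂ^{N+1}`. -/
noncomputable def extendFam (N : ℕ) (x : Fin (2 * N) → (Fin N → ℂ)) :
    Fin (2 * (N + 1)) → (Fin (N + 1) → ℂ) := fun j =>
  if h : (j : ℕ) < 2 * N then snoc0 N (x ⟨(j : ℕ), h⟩)
  else if (j : ℕ) = 2 * N then eL N else Complex.I • eL N

lemma extendFam_lebBasis (N : ℕ) :
    extendFam N (lebBasis N) = ⇑(lebBasis (N + 1)) := by
  funext j
  rw [extendFam]
  by_cases h : (j : ℕ) < 2 * N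
  · rw [dif_pos h, lebBasis_succ_lt N j h]
  · rw [dif_neg h]
    by_cases h2 : (j : ℕ) = 2 * N
    · rw [if_pos h2, lebBasis_succ_first N j h2]
    · have h3 : (j : ℕ) = 2 * N + 1 := by omega
      rw [if_neg h2, lebBasis_succ_second N j h3]
noncomputable def splitEquiv (N : ℕ) : (Fin (N + 1) → ℂ) ≃ₗ[ℝ] (Fin N → ℂ) × ℂ :=
  LinearEquiv.ofLinear
    (LinearMap.prod
      ((LinearMap.pi fun j : Fin N => LinearMap.proj j.castSucc :
          (Fin (N + 1) → ℂ) →ₗ[ℂ] (Fin N → ℂ)).restrictScalars ℝ)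
      ((LinearMap.proj (Fin.last N) : (Fin (N + 1) → ℂ) →ₗ[ℂ] ℂ).restrictScalars ℝ))
    (((snoc0 N).restrictScalars ℝ).comp (LinearMap.fst ℝ (Fin N → ℂ) ℂ) +
      ((LinearMap.toSpanSingleton ℂ (Fin (N + 1) → ℂ) (eL N)).restrictScalars ℝ).comp
        (LinearMap.snd ℝ (Fin N → ℂ) ℂ))
    (by
      ext ⟨y, t⟩ <;>
        simp [LinearMap.toSpanSingleton, snoc0_castSucc, snoc0_last, eL_castSucc, eL_last]) 
    (by
      refine LinearMap.ext fun v => ?_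
      funext i
      induction i using Fin.lastCases with
      | last =>
        simp [LinearMap.toSpanSingleton_apply, snoc0_last, eL_last]
      | cast j =>
        simp [LinearMap.toSpanSingleton_apply, snoc0_castSucc, eL_castSucc])

lemma splitEquiv_snoc0 (N : ℕ) (y : Fin N → ℂ) : splitEquiv N (snoc0 N y) = (y, 0) := by
  simp only [splitEquiv, LinearEquiv.ofLinear_apply, LinearMap.prod_apply, Pi.prod]
  refine Prod.ext ?_ ?_
  · funext j
    simp [snoc0_castSucc]
  · simp [snoc0_last]

lemma splitEquiv_eL (N : ℕ) : splitEquiv N (eL N) = (0, 1) := by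
  simp only [splitEquiv, LinearEquiv.ofLinear_apply, LinearMap.prod_apply, Pi.prod]
  refine Prod.ext ?_ ?_
  · funext j
    simp [eL_castSucc]
  · simp [eL_last]

lemma splitEquiv_smul_eL (N : ℕ) : splitEquiv N (Complex.I • eL N) = (0, Complex.I) := by
  simp only [splitEquiv, LinearEquiv.ofLinear_apply, LinearMap.prod_apply, Pi.prod]
  refine Prod.ext ?_ ?_
  · funext j
    simp [eL_castSucc, Pi.smul_apply]
  · simp [eL_last, Pi.smul_apply]

lemma splitEquiv_symm (N : ℕ) (y : Fin N → ℂ) (t : ℂ) :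
    (splitEquiv N).symm (y, t) = snoc0 N y + t • eL N := by
  simp [splitEquiv, LinearEquiv.ofLinear_symm_apply, LinearMap.toSpanSingleton]

lemma block_det (N : ℕ) (x : Fin (2 * N) → (Fin N → ℂ)) :
    lebesgueForm (N + 1) (extendFam N x) = lebesgueForm N x := by
  classical
  set M : (Fin N → ℂ) →ₗ[ℝ] (Fin N → ℂ) := (lebBasis N).constr ℕ x with hM
  set L : (Fin (N + 1) → ℂ) →ₗ[ℝ] (Fin (N + 1) → ℂ) :=
    ((splitEquiv N).symm.toLinearMap.comp
      ((M.prodMap (LinearMap.id : ℂ →ₗ[ℝ] ℂ)).comp (splitEquiv N).toLinearMap)) with hL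
  have hMx : ∀ j, M (lebBasis N j) = x j := fun j => (lebBasis N).constr_basis ℕ x j
  have hL1 : ∀ y : Fin N → ℂ, L (snoc0 N y) = snoc0 N (M y) := by
    intro y
    rw [hL]
    simp only [LinearMap.comp_apply, LinearEquiv.coe_toLinearMap]
    rw [splitEquiv_snoc0]
    have : (M.prodMap (LinearMap.id : ℂ →ₗ[ℝ] ℂ)) (y, 0) = (M y, 0) := by simp
    rw [this, splitEquiv_symm]
    simp
  have hL2 : L (eL N) = eL N := by
    rw [hL]
    simp only [LinearMap.comp_apply, LinearEquiv.coe_toLinearMap]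
    rw [splitEquiv_eL]
    have : (M.prodMap (LinearMap.id : ℂ →ₗ[ℝ] ℂ)) (0, 1) = (0, 1) := by simp
    rw [this, splitEquiv_symm]
    simp
  have hL3 : L (Complex.I • eL N) = Complex.I • eL N := by
    rw [hL]
    simp only [LinearMap.comp_apply, LinearEquiv.coe_toLinearMap]
    rw [splitEquiv_smul_eL]
    have : (M.prodMap (LinearMap.id : ℂ →ₗ[ℝ] ℂ)) (0, Complex.I) = (0, Complex.I) := by simp
    rw [this, splitEquiv_symm]
    simp
  have hfam : (L ∘ ⇑(lebBasis (N + 1))) = extendFam N x := by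
    funext j
    rw [← extendFam_lebBasis]
    rw [Function.comp_apply, extendFam, extendFam]
    by_cases h : (j : ℕ) < 2 * N
    · simp only [dif_pos h]
      rw [hL1, hMx]
    · by_cases h2 : (j : ℕ) = 2 * N
      · simp only [dif_neg h, if_pos h2]
        exact hL2
      · simp only [dif_neg h, if_neg h2]
        exact hL3
  have hdetL : lebesgueForm (N + 1) (extendFam N x) = LinearMap.det L := by
    rw [lebesgueForm_eq, ← hfam, Module.Basis.det_comp, Module.Basis.det_self, mul_one]
  have hdetM : lebesgueForm N x = LinearMap.det M := by
    have hx : x = M ∘ ⇑(lebBasis N) := funext fun j => (hMx j).symm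
    rw [lebesgueForm_eq, hx, Module.Basis.det_comp, Module.Basis.det_self, mul_one]
  rw [hdetL, hdetM]
  have hconj : LinearMap.det L = LinearMap.det (M.prodMap (LinearMap.id : ℂ →ₗ[ℝ] ℂ)) := by
    rw [hL]
    exact LinearMap.det_conj _ (splitEquiv N).symm
  rw [hconj]
  rw [← LinearMap.det_toMatrix ((lebBasis N).prod Complex.basisOneI),
    LinearMap.toMatrix_prodMap, Matrix.det_fromBlocks_zero₂₁, LinearMap.toMatrix_id,
    Matrix.det_one, mul_one, LinearMap.det_toMatrix]
lemma append_lt {α : Sort*} {m n : ℕ} (a : Fin m → α) (b : Fin n → α) (i : Fin (m + n))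
    (h : (i : ℕ) < m) : Fin.append a b i = a ⟨(i : ℕ), h⟩ :=
  (congrArg (Fin.append a b) (Fin.ext rfl : i = Fin.castAdd n ⟨(i : ℕ), h⟩)).trans
    (Fin.append_left a b _)

lemma append_ge {α : Sort*} {m n : ℕ} (a : Fin m → α) (b : Fin n → α) (i : Fin (m + n))
    (h : m ≤ (i : ℕ)) : Fin.append a b i = b ⟨(i : ℕ) - m, by omega⟩ :=
  (congrArg (Fin.append a b)
      (Fin.ext (by simp; omega) : i = Fin.natAdd m ⟨(i : ℕ) - m, by omega⟩)).trans
    (Fin.append_right a b _)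

lemma snoc0_mem_span (N : ℕ) {m : ℕ} (v : Fin m → (Fin (N + 1) → ℂ)) (T : Set (Fin m))
    (hT : ∀ j : Fin (2 * N), ∃ i ∈ T, v i = snoc0 N (lebBasis N j)) (y : Fin N → ℂ) :
    snoc0 N y ∈ Submodule.span ℝ (v '' T) := by
  have hy : y ∈ Submodule.span ℝ (Set.range (lebBasis N)) := by
    rw [Module.Basis.span_eq]; trivial
  have h2 : snoc0 N y ∈
      Submodule.map ((snoc0 N).restrictScalars ℝ) (Submodule.span ℝ (Set.range (lebBasis N))) :=
    ⟨y, hy, rfl⟩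
  rw [Submodule.map_span] at h2
  refine Submodule.span_mono ?_ h2
  rintro _ ⟨_, ⟨j, rfl⟩, rfl⟩
  obtain ⟨i, hiT, hv⟩ := hT j
  exact ⟨i, hiT, hv⟩

lemma smul_eL_mem_span (N : ℕ) {m : ℕ} (v : Fin m → (Fin (N + 1) → ℂ)) (T : Set (Fin m))
    (i1 i2 : Fin m) (h1 : i1 ∈ T) (h2 : i2 ∈ T) (hv1 : v i1 = eL N)
    (hv2 : v i2 = Complex.I • eL N) (c : ℂ) :
    c • eL N ∈ Submodule.span ℝ (v '' T) := by
  refine Submodule.span_mono ?_ (smul_eL_mem N c)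
  intro t ht
  rcases ht with h | h
  · exact ⟨i1, h1, by rw [hv1, h]⟩
  · exact ⟨i2, h2, by rw [hv2]; exact h.symm ▸ rfl⟩

lemma main_eval (N₁ N₂ : ℕ) (hN : N₂ ≤ N₁) (k : Fin N₁)
    (A : (Fin N₁ → ℂ) →ₗ[ℂ] (Fin N₂ → ℂ)) (hA : Function.Surjective A)
    (Ahat : (Fin (N₁ + 1) → ℂ) →ₗ[ℂ] (Fin (N₂ + 1) → ℂ))
    (hrows : ∀ (z : Fin N₁ → ℂ) (i : Fin N₂), Ahat (Jdup N₁ k z) i.castSucc = A z i)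
    (hlast : ∀ w : Fin (N₁ + 1) → ℂ, Ahat w (Fin.last N₂) = w k.castSucc + w (Fin.last N₁))
    (η : AlternatingMap ℝ (Fin N₁ → ℂ) ℝ (Fin (2 * N₁ - 2 * N₂)))
    (ηhat : AlternatingMap ℝ (Fin (N₁ + 1) → ℂ) ℝ (Fin (2 * N₁ - 2 * N₂)))
    (hη : wedge η ((lebesgueForm N₂).compLinearMap (A.restrictScalars ℝ))
      = (lebesgueForm N₁).domDomCongr (finCongr (by have := hN; omega)))
    (hηhat : wedge ηhat ((lebesgueForm (N₂ + 1)).compLinearMap (Ahat.restrictScalars ℝ))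
      = (lebesgueForm (N₁ + 1)).domDomCongr (finCongr (by have := hN; omega)))
    (c : Fin (2 * N₁ - 2 * N₂) → (Fin N₁ → ℂ)) (hc : ∀ i, c i ∈ LinearMap.ker A) :
    ηhat (fun i => Jdup N₁ k (c i)) = η c := by
  classical
  obtain ⟨s, hs⟩ := A.exists_rightInverse_of_surjective (LinearMap.range_eq_top.2 hA)
  have hAs : ∀ v, A (s v) = v := fun v => by
    have := LinearMap.ext_iff.mp hs v
    simpa using this
  set w : Fin (2 * N₂) → (Fin N₁ → ℂ) := fun j => s (lebBasis N₂ j) with hw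
  -- key structural identity
  have key1 : ∀ y : Fin N₁ → ℂ, Ahat (Jdup N₁ k y) = snoc0 N₂ (A y) := by
    intro y
    funext i
    induction i using Fin.lastCases with
    | last =>
      rw [snoc0_last, hlast, Jdup_last, Jdup_castSucc, add_neg_cancel]
    | cast j =>
      rw [snoc0_castSucc, hrows]
  -- the ν side
  set z : Fin (2 * N₁ - 2 * N₂ + 2 * N₂) → (Fin N₁ → ℂ) := Fin.append c w with hz
  set xstar : Fin (2 * N₁) → (Fin N₁ → ℂ) :=
    fun r => z (finCongr (by omega : 2 * N₁ = 2 * N₁ - 2 * N₂ + 2 * N₂) r) with hxstar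
  have hνside : η c = lebesgueForm N₁ xstar := by
    have happ := DFunLike.congr_fun hη z
    rw [wedge_apply_eq η _ ((LinearMap.ker A).restrictScalars ℝ) ?hg z ?hx] at happ
    case hg =>
      intro y ⟨j, hj⟩
      rw [AlternatingMap.compLinearMap_apply]
      refine AlternatingMap.map_coord_zero _ j ?_
      simpa using hj
    case hx =>
      intro i
      have : z (Fin.castAdd (2 * N₂) i) = c i := Fin.append_left c w i
      rw [this]
      simpa using hc i
    have hfst : (fun i => z (Fin.castAdd (2 * N₂) i)) = c :=
      funext fun i => Fin.append_left c w i
    have hsnd : ((lebesgueForm N₂).compLinearMap (A.restrictScalars ℝ))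
        (fun j => z (Fin.natAdd (2 * N₁ - 2 * N₂) j)) = 1 := by
      rw [AlternatingMap.compLinearMap_apply]
      have : (fun j => (A.restrictScalars ℝ) (z (Fin.natAdd (2 * N₁ - 2 * N₂) j)))
          = ⇑(lebBasis N₂) := by
        funext j
        rw [show z (Fin.natAdd (2 * N₁ - 2 * N₂) j) = w j from Fin.append_right c w j]
        simp [hw, hAs]
      rw [this, lebesgueForm_eq, Module.Basis.det_self]
    rw [hfst, hsnd, mul_one] at happ
    rw [happ, AlternatingMap.domDomCongr_apply]
    rfl
  -- the hat side
  set wh : Fin (2 * (N₂ + 1)) → (Fin (N₁ + 1) → ℂ) := fun j =>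
    if h : (j : ℕ) < 2 * N₂ then Jdup N₁ k (w ⟨(j : ℕ), h⟩)
    else if (j : ℕ) = 2 * N₂ then eL N₁ else Complex.I • eL N₁ with hwh
  set zh : Fin (2 * N₁ - 2 * N₂ + 2 * (N₂ + 1)) → (Fin (N₁ + 1) → ℂ) :=
    Fin.append (fun i => Jdup N₁ k (c i)) wh with hzh
  have happ2 := DFunLike.congr_fun hηhat zh
  rw [wedge_apply_eq ηhat _ ((LinearMap.ker Ahat).restrictScalars ℝ) ?hg2 zh ?hx2] at happ2
  case hg2 =>
    intro y ⟨j, hj⟩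
    rw [AlternatingMap.compLinearMap_apply]
    refine AlternatingMap.map_coord_zero _ j ?_
    simpa using hj
  case hx2 =>
    intro i
    have : zh (Fin.castAdd (2 * (N₂ + 1)) i) = Jdup N₁ k (c i) :=
      Fin.append_left _ wh i
    rw [this]
    have : Ahat (Jdup N₁ k (c i)) = 0 := by
      rw [key1]
      have : A (c i) = 0 := hc i
      rw [this, map_zero]
    simpa using this
  have hfst2 : (fun i => zh (Fin.castAdd (2 * (N₂ + 1)) i)) = fun i => Jdup N₁ k (c i) :=
    funext fun i => Fin.append_left _ wh i
  -- the second factor on the hat side equals 1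
  have hζlast : Ahat (eL N₁) (Fin.last N₂) = 1 := by
    rw [hlast, eL_castSucc, eL_last, zero_add]
  have hsnd2 : ((lebesgueForm (N₂ + 1)).compLinearMap (Ahat.restrictScalars ℝ))
      (fun j => zh (Fin.natAdd (2 * N₁ - 2 * N₂) j)) = 1 := by
    rw [AlternatingMap.compLinearMap_apply]
    have hwhval : (fun j => (Ahat.restrictScalars ℝ) (zh (Fin.natAdd (2 * N₁ - 2 * N₂) j)))
        = fun j => Ahat (wh j) := by
      funext j
      rw [show zh (Fin.natAdd (2 * N₁ - 2 * N₂) j) = wh j from Fin.append_right _ wh j]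
      rfl
    rw [hwhval]
    have hcol : lebesgueForm (N₂ + 1) (fun j => Ahat (wh j))
        = lebesgueForm (N₂ + 1) (extendFam N₂ ⇑(lebBasis N₂)) := by
      refine alt_colops _ _ _ {j : Fin (2 * (N₂ + 1)) | (j : ℕ) < 2 * N₂} ?_ ?_
      · intro j hj
        have hj' : (j : ℕ) < 2 * N₂ := hj
        rw [hwh]
        simp only [dif_pos hj']
        rw [key1, extendFam]
        simp only [dif_pos hj']
        rw [hw]
        simp [hAs]
      · intro j
        by_cases hj : (j : ℕ) < 2 * N₂
        · have heq : Ahat (wh j) = extendFam N₂ (⇑(lebBasis N₂)) j := by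
            rw [hwh]
            simp only [dif_pos hj]
            rw [key1, extendFam]
            simp only [dif_pos hj]
            rw [hw]
            simp [hAs]
          rw [heq, sub_self]
          exact Submodule.zero_mem _
        · have hTspan : ∀ y : Fin N₂ → ℂ, snoc0 N₂ y ∈ Submodule.span ℝ
              ((extendFam N₂ ⇑(lebBasis N₂)) '' {j : Fin (2 * (N₂ + 1)) | (j : ℕ) < 2 * N₂}) := by
            intro y
            refine snoc0_mem_span N₂ _ _ ?_ y
            intro j'
            refine ⟨⟨(j' : ℕ), by omega⟩, by simpa using j'.isLt, ?_⟩
            rw [extendFam]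
            simp only [dif_pos (show ((⟨(j' : ℕ), by omega⟩ : Fin (2 * (N₂ + 1))) : ℕ) < 2 * N₂
              from j'.isLt)]
          by_cases hj2 : (j : ℕ) = 2 * N₂
          · have hwhj : wh j = eL N₁ := by rw [hwh]; simp [hj, hj2]
            have hvj : extendFam N₂ (⇑(lebBasis N₂)) j = eL N₂ := by
              rw [extendFam]; simp [hj, hj2]
            rw [hwhj, hvj]
            have hlast0 : (Ahat (eL N₁) - eL N₂) (Fin.last N₂) = 0 := by
              simp [hζlast, eL_last]
            rw [eq_snoc0_of_last_eq_zero _ hlast0]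
            exact hTspan _
          · have hwhj : wh j = Complex.I • eL N₁ := by rw [hwh]; simp [hj, hj2]
            have hvj : extendFam N₂ (⇑(lebBasis N₂)) j = Complex.I • eL N₂ := by
              rw [extendFam]; simp [hj, hj2]
            rw [hwhj, hvj, map_smul]
            have : Complex.I • Ahat (eL N₁) - Complex.I • eL N₂
                = Complex.I • (Ahat (eL N₁) - eL N₂) := (smul_sub _ _ _).symm
            rw [this]
            have hlast0 : (Complex.I • (Ahat (eL N₁) - eL N₂)) (Fin.last N₂) = 0 := by
              simp [hζlast, eL_last]
            rw [eq_snoc0_of_last_eq_zero _ hlast0]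
            exact hTspan _
    rw [hcol, extendFam_lebBasis, lebesgueForm_eq, Module.Basis.det_self]
  rw [hfst2, hsnd2, mul_one] at happ2
  -- now identify the RHS of happ2 with lebesgueForm N₁ xstar
  rw [AlternatingMap.domDomCongr_apply] at happ2
  set Ghat : Fin (2 * (N₁ + 1)) → (Fin (N₁ + 1) → ℂ) :=
    (zh ∘ (finCongr (by omega : 2 * (N₁ + 1) = 2 * N₁ - 2 * N₂ + 2 * (N₂ + 1)))) with hGhat
  have hzh_at : ∀ t : Fin (2 * N₁ - 2 * N₂ + 2 * (N₂ + 1)),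
      zh t = if h : (t : ℕ) < 2 * N₁ - 2 * N₂ then Jdup N₁ k (c ⟨(t : ℕ), h⟩)
        else if h2 : (t : ℕ) - (2 * N₁ - 2 * N₂) < 2 * N₂ then
          Jdup N₁ k (w ⟨(t : ℕ) - (2 * N₁ - 2 * N₂), h2⟩)
        else if (t : ℕ) - (2 * N₁ - 2 * N₂) = 2 * N₂ then eL N₁ else Complex.I • eL N₁ := by
    intro t
    by_cases h : (t : ℕ) < 2 * N₁ - 2 * N₂
    · rw [dif_pos h, hzh, append_lt _ _ _ h]
    · rw [dif_neg h, hzh, append_ge _ _ _ (not_lt.mp h), hwh]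
  have hxstar_at : ∀ t : Fin (2 * N₁),
      xstar t = if h : (t : ℕ) < 2 * N₁ - 2 * N₂ then c ⟨(t : ℕ), h⟩
        else w ⟨(t : ℕ) - (2 * N₁ - 2 * N₂), by omega⟩ := by
    intro t
    have ht0 : xstar t = z ⟨(t : ℕ), by omega⟩ := rfl
    rw [ht0, hz]
    by_cases h : (t : ℕ) < 2 * N₁ - 2 * N₂
    · rw [dif_pos h, append_lt _ _ _ h]
    · rw [dif_neg h, append_ge _ _ _ (not_lt.mp h)]
  have hGhat_at : ∀ t : Fin (2 * (N₁ + 1)), Ghat t = zh ⟨(t : ℕ), by omega⟩ := fun t => rfl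
  have hT'eq : ∀ r : Fin (2 * (N₁ + 1)), 2 * N₁ ≤ (r : ℕ) →
      Ghat r = extendFam N₁ xstar r := by
    intro r hr'
    have hrlt : (r : ℕ) < 2 * N₁ + 2 := by omega
    rw [hGhat_at r, hzh_at, extendFam]
    by_cases h2 : (r : ℕ) = 2 * N₁
    · rw [dif_neg (show ¬ (r : ℕ) < 2 * N₁ - 2 * N₂ by omega),
        dif_neg (show ¬ (r : ℕ) - (2 * N₁ - 2 * N₂) < 2 * N₂ by omega),
        if_pos (show (r : ℕ) - (2 * N₁ - 2 * N₂) = 2 * N₂ by omega),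
        dif_neg (show ¬ (r : ℕ) < 2 * N₁ by omega), if_pos h2]
    · rw [dif_neg (show ¬ (r : ℕ) < 2 * N₁ - 2 * N₂ by omega),
        dif_neg (show ¬ (r : ℕ) - (2 * N₁ - 2 * N₂) < 2 * N₂ by omega),
        if_neg (show ¬ (r : ℕ) - (2 * N₁ - 2 * N₂) = 2 * N₂ by omega),
        dif_neg (show ¬ (r : ℕ) < 2 * N₁ by omega), if_neg h2]
  have hGcol : lebesgueForm (N₁ + 1) Ghat = lebesgueForm (N₁ + 1) (extendFam N₁ xstar) := by
    refine alt_colops _ _ _ {r : Fin (2 * (N₁ + 1)) | 2 * N₁ ≤ (r : ℕ)} ?_ ?_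
    · intro r hr
      exact hT'eq r hr
    · intro r
      by_cases hr : (r : ℕ) < 2 * N₁
      · have hGr : Ghat r = Jdup N₁ k (xstar ⟨(r : ℕ), hr⟩) := by
          rw [hGhat_at r, hzh_at, hxstar_at]
          by_cases hrd : (r : ℕ) < 2 * N₁ - 2 * N₂
          · rw [dif_pos (show (r : ℕ) < 2 * N₁ - 2 * N₂ from hrd), dif_pos hrd]
          · rw [dif_neg (show ¬ (r : ℕ) < 2 * N₁ - 2 * N₂ from hrd), dif_neg hrd,
              dif_pos (show (r : ℕ) - (2 * N₁ - 2 * N₂) < 2 * N₂ by omega)]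
        have hVr : extendFam N₁ xstar r = snoc0 N₁ (xstar ⟨(r : ℕ), hr⟩) := by
          rw [extendFam]
          exact dif_pos hr
        rw [hGr, hVr, Jdup_sub_snoc0]
        refine smul_eL_mem_span N₁ _ _ ⟨2 * N₁, by omega⟩ ⟨2 * N₁ + 1, by omega⟩
          (show 2 * N₁ ≤ 2 * N₁ by omega) (show 2 * N₁ ≤ 2 * N₁ + 1 by omega) ?_ ?_ _
        · rw [extendFam]
          rw [dif_neg (show ¬ (2 * N₁ : ℕ) < 2 * N₁ by omega), if_pos rfl]
        · rw [extendFam]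
          rw [dif_neg (show ¬ (2 * N₁ + 1 : ℕ) < 2 * N₁ by omega),
            if_neg (show ¬ (2 * N₁ + 1 : ℕ) = 2 * N₁ by omega)]
      · have : Ghat r - extendFam N₁ xstar r = 0 := by
          rw [hT'eq r (by omega), sub_self]
        rw [this]
        exact Submodule.zero_mem _
  rw [hGcol, block_det] at happ2
  rw [happ2, hνside]

/-- The increased exact sequence.  Let `A : ℂ^{N₁} → ℂ^{N₂}` be surjective, and let
`Â : ℂ^{N₁+1} → ℂ^{N₂+1}` extend `A` in the following sense: the first `N₂` rows of `Â`
pull back via `J₁` to the rows of `A`, and the last row of `Â` is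
`h(z₁,…,z_{N₁+1}) = z_k + z_{N₁+1}`.  Let `I : ker A → ker Â` be the induced isomorphism
(the restriction of `J₁`).  Then `I* ν̂ = c₀ · ν`, where `ν`, `ν̂` are the kernel volume
forms induced by the Lebesgue measures via the exact sequences (i.e. `ν = ι*η` for any
`η` with `η ∧ A*λ_{2N₂} = λ_{2N₁}`, and similarly for `ν̂`), and `c₀` is a constant
depending only on `N₁`, `N₂` — in particular independent of which coordinate `k` is
doubled. -/
theorem increased_exact_sequence_volume (N₁ N₂ : ℕ) (hN : N₂ ≤ N₁) :
    ∃ c₀ : ℝ,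
      ∀ (k : Fin N₁)
        (A : (Fin N₁ → ℂ) →ₗ[ℂ] (Fin N₂ → ℂ)) (_ : Function.Surjective A)
        (Ahat : (Fin (N₁ + 1) → ℂ) →ₗ[ℂ] (Fin (N₂ + 1) → ℂ))
        (_ : Function.Surjective Ahat)
        (_ : ∀ (z : Fin N₁ → ℂ) (i : Fin N₂), Ahat (Jdup N₁ k z) i.castSucc = A z i)
        (_ : ∀ w : Fin (N₁ + 1) → ℂ,
          Ahat w (Fin.last N₂) = w k.castSucc + w (Fin.last N₁))
        (I : (LinearMap.ker A) →ₗ[ℂ] (LinearMap.ker Ahat))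
        (_ : ∀ x : LinearMap.ker A,
          (I x : Fin (N₁ + 1) → ℂ) = Jdup N₁ k (x : Fin N₁ → ℂ))
        (_ : Function.Bijective I)
        (η : AlternatingMap ℝ (Fin N₁ → ℂ) ℝ (Fin (2 * N₁ - 2 * N₂)))
        (ηhat : AlternatingMap ℝ (Fin (N₁ + 1) → ℂ) ℝ (Fin (2 * N₁ - 2 * N₂)))
        (_ : wedge η ((lebesgueForm N₂).compLinearMap (A.restrictScalars ℝ))
          = (lebesgueForm N₁).domDomCongr (finCongr (by omega)))
        (_ : wedge ηhat ((lebesgueForm (N₂ + 1)).compLinearMap (Ahat.restrictScalars ℝ))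
          = (lebesgueForm (N₁ + 1)).domDomCongr (finCongr (by omega))),
        (ηhat.compLinearMap
            (LinearMap.restrictScalars ℝ (Submodule.subtype (LinearMap.ker Ahat)))).compLinearMap
          (LinearMap.restrictScalars ℝ I)
          = c₀ • η.compLinearMap
              (LinearMap.restrictScalars ℝ (Submodule.subtype (LinearMap.ker A))) := by
  refine ⟨1, ?_⟩
  intro k A hA Ahat hAhat hrows hlast I hI hIbij η ηhat hη hηhat
  rw [one_smul]
  have h1 : Module.finrank ℂ ↥(LinearMap.ker A) = N₁ - N₂ := by
    have h2 := LinearMap.finrank_range_add_finrank_ker A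
    rw [LinearMap.range_eq_top.mpr hA, finrank_top] at h2
    rw [Module.finrank_fintype_fun_eq_card, Module.finrank_fintype_fun_eq_card] at h2
    simp only [Fintype.card_fin] at h2
    omega
  have hR : Module.finrank ℝ ↥(LinearMap.ker A) = 2 * N₁ - 2 * N₂ := by
    have h3 := Module.finrank_mul_finrank ℝ ℂ ↥(LinearMap.ker A)
    rw [Complex.finrank_real_complex, h1] at h3
    omega
  let b : Module.Basis (Fin (2 * N₁ - 2 * N₂)) ℝ ↥(LinearMap.ker A) :=
    Module.finBasisOfFinrankEq ℝ _ hR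
  set F1 := (ηhat.compLinearMap
      (LinearMap.restrictScalars ℝ (Submodule.subtype (LinearMap.ker Ahat)))).compLinearMap
    (LinearMap.restrictScalars ℝ I) with hF1
  set F2 := η.compLinearMap
      (LinearMap.restrictScalars ℝ (Submodule.subtype (LinearMap.ker A))) with hF2
  rw [F1.eq_smul_basis_det b, F2.eq_smul_basis_det b]
  congr 1
  have hv1 : F1 ⇑b = ηhat (fun i => Jdup N₁ k ((b i : Fin N₁ → ℂ))) := by
    rw [hF1]
    rw [AlternatingMap.compLinearMap_apply, AlternatingMap.compLinearMap_apply]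
    congr 1
    funext i
    exact hI (b i)
  have hv2 : F2 ⇑b = η (fun i => ((b i : Fin N₁ → ℂ))) := by
    rw [hF2, AlternatingMap.compLinearMap_apply]
    rfl
  rw [hv1, hv2]
  exact main_eval N₁ N₂ hN k A hA Ahat hrows hlast η ηhat hη hηhat
    (fun i => (b i : Fin N₁ → ℂ)) (fun i => (b i).2)
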